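/- Let k, g be natural numbers with 2 ≤ g ≤ k. Then Σ_{i=1}^{g−1} C(k−i+1, g−i+1) ≤ C(k,g) + (g−2)·C(k−1, g−1); that is, the number of row additions performed by the stack-based algorithm, C(k,g)+C(k−1,g−1)+…+C(k−g+2,2), is at most the number performed by the optimized algorithm. -/
import Mathlib
open Finset

lemma key (a m : ℕ) :
    ∑ t ∈ Finset.range (m+1), (a+t).choose a * (a + (m + 1 - t))
      = (a+2+m).choose (a+2) + a * (a+1+m).choose (a+1) := by
  induction m with
  | zero => simp; omega
  | succ m ih =>
    rw [Finset.sum_range_succ]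
    have hs : ∀ t ∈ Finset.range (m+1),
        (a+t).choose a * (a + (m + 1 + 1 - t))
          = (a+t).choose a * (a + (m + 1 - t)) + (a+t).choose a := by
      intro t ht
      rw [Finset.mem_range] at ht
      have : a + (m + 1 + 1 - t) = (a + (m+1-t)) + 1 := by omega
      rw [this, Nat.mul_add, Nat.mul_one]
    rw [Finset.sum_congr rfl hs, Finset.sum_add_distrib, ih]
    have hstick : ∑ t ∈ Finset.range (m+1), (a+t).choose a
        = ∑ i ∈ Finset.Icc a (a+m), i.choose a := by
      rw [← Finset.Ico_add_one_right_eq_Icc, Finset.sum_Ico_eq_sum_range,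
        show a+m+1-a = m+1 from by omega]
    rw [hstick, Nat.sum_Icc_choose]
    have e1 : a + (m+1) = a + 1 + m := by ring
    have e2 : a + m + 1 = a + 1 + m := by ring
    have e3 : a + (m + 1 + 1 - (m+1)) = a + 1 := by omega
    rw [e1, e2, e3]
    have p1 : (a+2+m).choose (a+1) = (a+1+m).choose a + (a+1+m).choose (a+1) := by
      have : a+2+m = (a+1+m)+1 := by ring
      rw [this, Nat.choose_succ_succ]
    have p2 : (a+2+(m+1)).choose (a+2) = (a+2+m).choose (a+1) + (a+2+m).choose (a+2) := by
      have : a+2+(m+1) = (a+2+m)+1 := by ring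
      rw [this, Nat.choose_succ_succ]
    have e4 : a+1+(m+1) = a+2+m := by ring
    rw [e4, p2, p1]
    ring

/-- The stack-based algorithm performs no more row additions than the
optimized algorithm:
`Σ_{i=1}^{g-1} C(k-i+1, g-i+1) ≤ C(k,g) + (g-2)·C(k-1, g-1)`, the right-hand
side being `Σ_{j=g-1}^{k-1} C(j-1, g-2)·(g-2+k-j)`. -/
theorem stack_le_optimized (k g : ℕ) (hg : 2 ≤ g) (hgk : g ≤ k) :
    (∑ i ∈ Finset.Icc 1 (g - 1), (k - i + 1).choose (g - i + 1))
      ≤ k.choose g + (g - 2) * (k - 1).choose (g - 1) ∧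
    (∑ i ∈ Finset.Icc 1 (g - 1), (k - i + 1).choose (g - i + 1))
      ≤ ∑ j ∈ Finset.Icc (g - 1) (k - 1),
          (j - 1).choose (g - 2) * (g - 2 + (k - j)) := by
  have hA : (∑ i ∈ Finset.Icc 1 (g - 1), (k - i + 1).choose (g - i + 1))
      ≤ k.choose g + (g - 2) * (k - 1).choose (g - 1) := by
    rw [← Finset.Ico_add_one_right_eq_Icc, Finset.sum_Ico_eq_sum_range,
      show g - 1 + 1 - 1 = (g-2) + 1 from by omega, Finset.sum_range_succ']
    have h0 : (k - (1 + 0) + 1).choose (g - (1 + 0) + 1) = k.choose g := by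
      congr 1 <;> omega
    rw [h0]
    have hbound : ∀ t ∈ Finset.range (g-2),
        (k - (1 + (t+1)) + 1).choose (g - (1 + (t+1)) + 1) ≤ (k-1).choose (g-1) := by
      intro t ht
      rw [Finset.mem_range] at ht
      have e5 : k - (1 + (t+1)) + 1 = k - t - 1 := by omega
      have e6 : g - (1 + (t+1)) + 1 = g - t - 1 := by omega
      rw [e5, e6]
      have s1 : (k-t-1).choose (g-t-1) = (k-t-1).choose (k-g) := by
        rw [show g-t-1 = (k-t-1) - (k-g) from by omega]
        exact Nat.choose_symm (by omega)
      have s2 : (k-1).choose (g-1) = (k-1).choose (k-g) := by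
        rw [show g-1 = (k-1) - (k-g) from by omega]
        exact Nat.choose_symm (by omega)
      rw [s1, s2]
      exact Nat.choose_le_choose _ (by omega)
    calc (∑ t ∈ Finset.range (g-2),
            (k - (1 + (t+1)) + 1).choose (g - (1 + (t+1)) + 1)) + k.choose g
        ≤ (∑ _t ∈ Finset.range (g-2), (k-1).choose (g-1)) + k.choose g := by
          exact Nat.add_le_add_right (Finset.sum_le_sum hbound) _
      _ = k.choose g + (g-2) * (k-1).choose (g-1) := by
          rw [Finset.sum_const, Finset.card_range, smul_eq_mul]
          ring
  refine ⟨hA, ?_⟩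
  have hB : (∑ j ∈ Finset.Icc (g - 1) (k - 1), (j - 1).choose (g - 2) * (g - 2 + (k - j)))
      = k.choose g + (g - 2) * (k - 1).choose (g - 1) := by
    rw [← Finset.Ico_add_one_right_eq_Icc, Finset.sum_Ico_eq_sum_range,
      show k - 1 + 1 - (g-1) = (k-g) + 1 from by omega]
    have hc : ∀ t ∈ Finset.range (k-g+1),
        (g - 1 + t - 1).choose (g - 2) * (g - 2 + (k - (g - 1 + t)))
          = ((g-2)+t).choose (g-2) * ((g-2) + ((k-g) + 1 - t)) := by
      intro t ht
      rw [Finset.mem_range] at ht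
      congr 1
      · congr 1; omega
      · omega
    rw [Finset.sum_congr rfl hc, key]
    congr 1
    · congr 1 <;> omega
    · congr 2 <;> omega
  rw [hB]
  exact hA
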